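/- Let G be a directed graph whose edge set is exactly the set of edges of a single walk w from s to t. If w visits every edge of G, then adding one edge to G (namely an edge whose endpoints already occur in w) yields a graph whose SCC quasi-order on the walk's spanned subgraph remains a linear order: specifically, adding an edge from the last SCC (in the reachability order) to some SCC C_j merges all SCCs from C_j onward into a single SCC, which becomes the new last SCC. -/

import Mathlib

/-- A walk in a directed graph `G` from `s` to `t`. -/
structure DWalk {V : Type*} (G : V → V → Prop) (s t : V) where
  len : ℕ
  f : ℕ → V
  source : f 0 = s
  target : f len = t
  adj : ∀ i < len, G (f i) (f (i + 1))

/-- Let `G` be a directed graph whose edges are exactly the edges of an `st`-walk `w`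
(so the SCCs of `G` are linearly ordered by reachability). Add a fresh edge from a
vertex `a` of the last SCC (i.e. a vertex reachable from every vertex of the walk) to
a vertex `b` occurring on the walk. Then in the new graph `G'`: reachability remains
total on the vertices of the walk (the SCC order remains linear), the SCC of `b` in
`G'` consists exactly of the vertices reachable from `b` in `G` (all SCCs from that of
`b` onward are merged), and this merged SCC is the new last SCC (every vertex of the
walk reaches `b`). -/
theorem stmt2 {V : Type*} (G : V → V → Prop) (s t a b : V) (w : DWalk G s t)
    (hcov : ∀ x y, G x y ↔ ∃ i < w.len, w.f i = x ∧ w.f (i + 1) = y)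
    (ha : ∃ j ≤ w.len, w.f j = a) (hb : ∃ j ≤ w.len, w.f j = b)
    (hlast : ∀ v, (∃ j ≤ w.len, w.f j = v) → Relation.ReflTransGen G v a) :
    let G' : V → V → Prop := fun x y => G x y ∨ (x = a ∧ y = b)
    let occ : V → Prop := fun v => ∃ j ≤ w.len, w.f j = v
    (∀ u v, occ u → occ v →
      Relation.ReflTransGen G' u v ∨ Relation.ReflTransGen G' v u) ∧
    (∀ v, occ v →
      ((Relation.ReflTransGen G' v b ∧ Relation.ReflTransGen G' b v) ↔
        Relation.ReflTransGen G b v)) ∧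
    (∀ v, occ v → Relation.ReflTransGen G' v b) := by
  intro G' occ
  have hsub : ∀ {x y}, Relation.ReflTransGen G x y → Relation.ReflTransGen G' x y :=
    fun h => Relation.ReflTransGen.mono (fun _ _ h => Or.inl h) _ _ h
  -- along the walk
  have hwalk : ∀ i j, i ≤ j → j ≤ w.len → Relation.ReflTransGen G (w.f i) (w.f j) := by
    intro i j hij hj
    induction j, hij using Nat.le_induction with
    | base => exact Relation.ReflTransGen.refl
    | succ n hn ih =>
      exact (ih (le_trans (Nat.le_succ n) hj)).tail (w.adj n (Nat.lt_of_succ_le hj))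
  -- every occ vertex reaches b in G'
  have hvb : ∀ v, occ v → Relation.ReflTransGen G' v b := by
    intro v hv
    exact (hsub (hlast v hv)).tail (Or.inr ⟨rfl, rfl⟩)
  -- G'-reachability from b collapses to G-reachability
  have hbG : ∀ v, Relation.ReflTransGen G' b v → Relation.ReflTransGen G b v := by
    intro v h
    induction h with
    | refl => exact Relation.ReflTransGen.refl
    | tail _ hxy ih =>
      rcases hxy with h | ⟨_, rfl⟩
      · exact ih.tail h
      · exact Relation.ReflTransGen.refl
  refine ⟨?_, ?_, hvb⟩
  · rintro u v ⟨i, hi, rfl⟩ ⟨j, hj, rfl⟩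
    rcases le_total i j with h | h
    · exact Or.inl (hsub (hwalk i j h hj))
    · exact Or.inr (hsub (hwalk j i h hi))
  · intro v hv
    constructor
    · rintro ⟨_, h⟩; exact hbG v h
    · intro h; exact ⟨hvb v hv, hsub h⟩
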